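/- Let $B, T, f, \sqrt{M_T} > 0$ with $M_T = \frac{2T^3}{3\sqrt{3}\sqrt{B}}$ and $f < M_T$; let $0 < a < b$ be the two positive roots of $-Bt^3 + tT^2 - f$. Suppose additionally $f \le T^2$. Then $a = \frac{f}{T^2}\left(1 + O\left(\frac{1}{T^2}\right)\right)$ as $T \to \infty$ (with implied constant depending on $B$), and consequently $\frac{T^2}{2a^2} - \frac{f}{3a^3} = \frac{T^6}{6 f^2} + \frac{1}{f^2} O(T^4)$. -/

import Mathlib

set_option maxHeartbeats 1000000

/-- Asymptotics of the smallest positive root `a` of `-Bt³ + tT² - f`: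
if `f ≤ T²` (and `f` below the critical value `M_T`), then `a = (f/T²)(1 + O(1/T²))`
as `T → ∞`, and consequently `T²/(2a²) - f/(3a³) = T⁶/(6f²) + (1/f²)O(T⁴)`. -/
theorem stmt19 (B : ℝ) (hB : 0 < B) :
    ∃ C > 0, ∃ T₀ > 0, ∀ T ≥ T₀, ∀ f : ℝ, 0 < f →
      f < 2 * T ^ 3 / (3 * Real.sqrt 3 * Real.sqrt B) → f ≤ T ^ 2 →
      ∀ a : ℝ, 0 < a → -B * a ^ 3 + a * T ^ 2 - f = 0 →
      (∀ s, 0 < s → -B * s ^ 3 + s * T ^ 2 - f = 0 → a ≤ s) →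
      |a - f / T ^ 2| ≤ C * (f / T ^ 2) * (1 / T ^ 2) ∧
      |T ^ 2 / (2 * a ^ 2) - f / (3 * a ^ 3) - T ^ 6 / (6 * f ^ 2)| ≤
        C * T ^ 4 / f ^ 2 := by
  refine ⟨4*B + 3*B^2, by positivity, 1, one_pos, ?_⟩
  intro T hT f hf hfM hfT a ha hroot hmin
  have hT0 : (0:ℝ) < T := lt_of_lt_of_le one_pos hT
  have hT2 : (0:ℝ) < T^2 := by positivity
  obtain ⟨s, hsdef⟩ : ∃ x : ℝ, x = Real.sqrt (3*B) := ⟨_, rfl⟩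
  have hs0 : 0 < s := hsdef ▸ Real.sqrt_pos.mpr (by positivity)
  have hs2 : s^2 = 3*B := by rw [hsdef]; exact Real.sq_sqrt (by positivity)
  have hsqm : 3 * Real.sqrt 3 * Real.sqrt B = 3 * s := by
    rw [hsdef, mul_assoc, Real.sqrt_mul (by norm_num : (0:ℝ) ≤ 3)]
  have hfM' : 3 * (f * s) < 2 * T^3 := by
    rw [hsqm] at hfM
    have := (lt_div_iff₀ (by linarith : (0:ℝ) < 3*s)).mp hfM
    linarith
  obtain ⟨tc, htc⟩ : ∃ x : ℝ, x = T / s := ⟨_, rfl⟩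
  have htc0 : 0 < tc := by rw [htc]; positivity
  have htcs : tc * s = T := by rw [htc]; field_simp
  have hT3 : T^3 = tc^3 * s^3 := by rw [← htcs]; ring
  have hcube : f < 2 * B * tc^3 := by
    have h1 : 3*(f*s) < 2*(tc^3*s^3) := by rw [← hT3]; exact hfM'
    have h2 : s^3 = 3*B*s := by
      calc s^3 = s^2 * s := by ring
        _ = 3*B*s := by rw [hs2]
    rw [h2] at h1
    nlinarith [hs0, h1]
  have htcT2 : tc * T^2 = 3*B*tc^3 := by
    linear_combination (-(tc*(T+tc*s)))*htcs + tc^3*hs2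
  -- value of polynomial at critical point is nonneg
  have hptc : 0 ≤ -B * tc^3 + tc * T^2 - f := by nlinarith [hcube, htcT2]
  -- IVT: root s' in (0, tc]
  have hcont : Continuous fun t : ℝ => -B * t^3 + t * T^2 - f := by fun_prop
  obtain ⟨r, hrmem, hpr⟩ := intermediate_value_Icc htc0.le hcont.continuousOn
    (show (0:ℝ) ∈ Set.Icc (-B * 0^3 + 0 * T^2 - f) (-B * tc^3 + tc * T^2 - f) from
      ⟨by norm_num; linarith, hptc⟩)
  have hr0 : 0 < r := by
    rcases lt_or_eq_of_le hrmem.1 with h | h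
    · exact h
    · exfalso; rw [← h] at hpr; norm_num at hpr; linarith
  have hatc : a ≤ tc := le_trans (hmin r hr0 hpr) hrmem.2
  have hBa2 : B * a^2 ≤ T^2 / 3 := by
    have h1 : a^2 ≤ tc^2 := by nlinarith
    have h2 : B * tc^2 = T^2/3 := by
      have : tc^2 * s^2 = T^2 := by nlinarith [htcs]
      nlinarith [hs2]
    nlinarith [mul_le_mul_of_nonneg_left h1 hB.le]
  have hu : 2*T^2/3 ≤ T^2 - B*a^2 := by linarith
  have hu0 : 0 < T^2 - B*a^2 := by linarith
  have hfe : f = a * (T^2 - B*a^2) := by linear_combination -hroot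
  clear hroot hmin hfM hfM' hcube hptc htcT2 hT3 htcs htc0 hatc hsqm hs2 hs0
  clear hrmem hpr hcont hr0
  clear r htc tc hsdef s
  subst hfe
  -- a ≤ 3/2
  have ha32 : a ≤ 3/2 := by nlinarith [mul_le_mul_of_nonneg_left hu ha.le]
  have ha4 : a^2 ≤ 9/4 := by nlinarith
  have h1T2 : 1 ≤ T^2 := by nlinarith
  have hT4 : T^2 ≤ T^4 := by nlinarith [mul_le_mul_of_nonneg_left h1T2 hT2.le]
  constructor
  · have e1 : a - a * (T^2 - B*a^2) / T^2 = B * a^3 / T^2 := by field_simp; ring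
    rw [e1, abs_of_nonneg (by positivity)]
    rw [show (4*B + 3*B^2) * (a * (T^2 - B*a^2) / T^2) * (1/T^2)
        = ((4*B + 3*B^2) * (a * (T^2 - B*a^2))) / T^4 by ring,
      show B * a^3 / T^2 = (B * a^3 * T^2) / T^4 by field_simp,
      div_le_div_iff₀ (by positivity) (by positivity)]
    have hmain : B * a^2 * T^2 ≤ (4*B + 3*B^2) * (T^2 - B*a^2) := by
      have h1 : B*T^2*a^2 ≤ B*T^2*(9/4) :=
        mul_le_mul_of_nonneg_left ha4 (mul_pos hB hT2).le
      have h2 : (4*B+3*B^2)*(2*T^2/3) ≤ (4*B+3*B^2)*(T^2-B*a^2) :=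
        mul_le_mul_of_nonneg_left hu (by positivity)
      nlinarith [h1, h2, mul_pos hB hT2, mul_pos (mul_pos hB hB) hT2]
    nlinarith [mul_le_mul_of_nonneg_left hmain (mul_nonneg ha.le (pow_pos hT0 4).le)]
  · have e2 : T^2 / (2*a^2) - a * (T^2 - B*a^2) / (3*a^3)
        - T^6 / (6 * (a * (T^2 - B*a^2))^2)
        = B^2 * a^2 * (2*B*a^2 - 3*T^2) / (6 * (T^2 - B*a^2)^2) := by
      have hne : (6 * (a * (T^2 - B*a^2))^2) ≠ 0 := mul_ne_zero (by norm_num) (pow_ne_zero 2 hf.ne')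
      have hne2 : 6 * (T^2 - B*a^2)^2 ≠ 0 := mul_ne_zero (by norm_num) (pow_ne_zero 2 hu0.ne')
      have h2a : 2*a^2 ≠ 0 := mul_ne_zero two_ne_zero (pow_ne_zero _ ha.ne')
      have h3a : 3*a^3 ≠ 0 := mul_ne_zero three_ne_zero (pow_ne_zero _ ha.ne')
      rw [div_sub_div _ _ h2a h3a, div_sub_div _ _ (mul_ne_zero h2a h3a) hne,
        div_eq_div_iff (mul_ne_zero (mul_ne_zero h2a h3a) hne) hne2]
      ring
    rw [e2, abs_of_nonpos (by
      apply div_nonpos_of_nonpos_of_nonneg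
      · nlinarith [mul_nonneg (mul_nonneg (sq_nonneg B) (sq_nonneg a))
          (by linarith : (0:ℝ) ≤ 3*T^2 - 2*B*a^2)]
      · positivity)]
    rw [show -(B^2 * a^2 * (2*B*a^2 - 3*T^2) / (6 * (T^2 - B*a^2)^2))
        = (B^2 * a^2 * (3*T^2 - 2*B*a^2)) / (6 * (T^2 - B*a^2)^2) by ring,
      div_le_div_iff₀ (by positivity) (by positivity)]
    have hmain : B^2 * a^4 * (3*T^2 - 2*B*a^2) ≤ 6 * (4*B + 3*B^2) * T^4 := by
      have ha16 : a^4 ≤ 81/16 := by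
        nlinarith [mul_nonneg (by linarith : (0:ℝ) ≤ 9/4 - a^2)
          (by positivity : (0:ℝ) ≤ a^2 + 9/4)]
      have h1 : B^2*a^4*(3*T^2 - 2*B*a^2) ≤ B^2*a^4*(3*T^2) :=
        mul_le_mul_of_nonneg_left (by nlinarith [mul_nonneg hB.le (sq_nonneg a)])
          (by positivity)
      have h2 : a^4*(B^2*(3*T^2)) ≤ (81/16)*(B^2*(3*T^2)) :=
        mul_le_mul_of_nonneg_right ha16 (by positivity)
      have h3 : (243/16*B^2)*T^2 ≤ (243/16*B^2)*T^4 :=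
        mul_le_mul_of_nonneg_left hT4 (by positivity)
      nlinarith [h1, h2, h3, mul_pos hB (pow_pos hT0 4), mul_pos (mul_pos hB hB) (pow_pos hT0 4)]
    calc B^2 * a^2 * (3*T^2 - 2*B*a^2) * (a * (T^2 - B*a^2))^2
        = (B^2 * a^4 * (3*T^2 - 2*B*a^2)) * (T^2 - B*a^2)^2 := by ring
      _ ≤ (6 * (4*B + 3*B^2) * T^4) * (T^2 - B*a^2)^2 := by
          exact mul_le_mul_of_nonneg_right hmain (sq_nonneg _)
      _ = (4*B + 3*B^2) * T^4 * (6 * (T^2 - B*a^2)^2) := by ring
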